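/- Let X be a nonempty compact Hausdorff topological space and h : [0,1] × X → ℝ continuous. Then ‖h‖ ≥ max_{x∈X} ∫₀¹ h(t,x) dt − min_{x∈X} ∫₀¹ h(t,x) dt, and equality ‖h‖ = max_{x∈X} ∫₀¹ h(t,x) dt − min_{x∈X} ∫₀¹ h(t,x) dt holds if and only if there exist points x₊, x₋ ∈ X with h(t,x₊) = max_{x∈X} h(t,x) and h(t,x₋) = min_{x∈X} h(t,x) for all t ∈ [0,1]; that is, if and only if both ⋂_{t∈[0,1]} maxset(h_t) and ⋂_{t∈[0,1]} minset(h_t) are nonempty. -/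
import Mathlib

open Set

/-- The Hofer (oscillation) norm of a function `u : [0,1] × X → ℝ`:
`‖u‖ = ∫₀¹ (max_{x∈X} u(t,x) − min_{x∈X} u(t,x)) dt`. -/
noncomputable def hoferNorm {X : Type*} [TopologicalSpace X] (u : ℝ → X → ℝ) : ℝ :=
  ∫ t in (0:ℝ)..1, ((⨆ x, u t x) - (⨅ x, u t x))

section Aux

variable {X : Type*} [TopologicalSpace X] [CompactSpace X] [Nonempty X]

lemma hofer_sup_lipschitz : LipschitzWith 1 (fun f : C(X, ℝ) => ⨆ x, f x) := by
  apply LipschitzWith.of_dist_le_mul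
  intro f g
  rw [NNReal.coe_one, one_mul, Real.dist_eq, abs_sub_le_iff]
  have key : ∀ f g : C(X, ℝ), (⨆ x, f x) ≤ (⨆ x, g x) + dist f g := by
    intro f g
    refine ciSup_le fun x => ?_
    have h1 := ContinuousMap.dist_apply_le_dist (f := f) (g := g) x
    rw [Real.dist_eq] at h1
    have h2 : g x ≤ ⨆ y, g y := le_ciSup (isCompact_range g.continuous).bddAbove x
    have h3 := abs_le.mp h1
    linarith [h3.1, h3.2]
  have k1 := key f g
  have k2 := key g f
  rw [dist_comm g f] at k2
  constructor <;> linarith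

lemma hofer_inf_lipschitz : LipschitzWith 1 (fun f : C(X, ℝ) => ⨅ x, f x) := by
  apply LipschitzWith.of_dist_le_mul
  intro f g
  rw [NNReal.coe_one, one_mul, Real.dist_eq, abs_sub_le_iff]
  have key : ∀ f g : C(X, ℝ), (⨅ x, g x) - dist f g ≤ (⨅ x, f x) := by
    intro f g
    refine le_ciInf fun x => ?_
    have h1 := ContinuousMap.dist_apply_le_dist (f := f) (g := g) x
    rw [Real.dist_eq] at h1
    have h2 : (⨅ y, g y) ≤ g x := ciInf_le (isCompact_range g.continuous).bddBelow x
    have h3 := abs_le.mp h1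
    linarith [h3.1, h3.2]
  have k1 := key f g
  have k2 := key g f
  rw [dist_comm g f] at k2
  constructor <;> linarith

lemma hofer_integral_lipschitz :
    LipschitzWith 1 (fun f : C(Set.Icc (0:ℝ) 1, ℝ) =>
      ∫ t in (0:ℝ)..1,
        f ⟨max 0 (min 1 t), ⟨le_max_left _ _, max_le zero_le_one (min_le_left _ _)⟩⟩) := by
  have hc : Continuous fun t : ℝ => (⟨max 0 (min 1 t),
      ⟨le_max_left _ _, max_le zero_le_one (min_le_left _ _)⟩⟩ : Set.Icc (0:ℝ) 1) :=
    Continuous.subtype_mk (continuous_const.max (continuous_const.min continuous_id)) _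
  apply LipschitzWith.of_dist_le_mul
  intro f g
  rw [NNReal.coe_one, one_mul, Real.dist_eq]
  have hf : Continuous fun t : ℝ => f ⟨max 0 (min 1 t), _⟩ := f.continuous.comp hc
  have hg : Continuous fun t : ℝ => g ⟨max 0 (min 1 t), _⟩ := g.continuous.comp hc
  rw [← intervalIntegral.integral_sub (hf.intervalIntegrable 0 1) (hg.intervalIntegrable 0 1)]
  calc |∫ t in (0:ℝ)..1, (f ⟨max 0 (min 1 t), _⟩ - g ⟨max 0 (min 1 t), _⟩)|
      ≤ ∫ t in (0:ℝ)..1, |f ⟨max 0 (min 1 t), _⟩ - g ⟨max 0 (min 1 t), _⟩| :=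
        intervalIntegral.abs_integral_le_integral_abs zero_le_one
    _ ≤ ∫ _t in (0:ℝ)..1, dist f g := by
        refine intervalIntegral.integral_mono_on zero_le_one
          ((hf.sub hg).abs.intervalIntegrable 0 1) (intervalIntegrable_const) fun t _ => ?_
        rw [← Real.dist_eq]
        exact ContinuousMap.dist_apply_le_dist _
    _ = dist f g := by simp

end Aux

/-- For a nonempty compact Hausdorff space X and continuous
`h : [0,1] × X → ℝ`, one has `‖h‖ ≥ max_x ∫₀¹ h(t,x) dt − min_x ∫₀¹ h(t,x) dt`,
with equality if and only if there are points `xp, xm ∈ X` with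
`h(t,xp) = max_x h(t,x)` and `h(t,xm) = min_x h(t,x)` for all `t ∈ [0,1]`,
i.e. iff `⋂_t maxset(h_t)` and `⋂_t minset(h_t)` are both nonempty. -/
theorem hoferNorm_ge_oscillation_of_time_average
    {X : Type*} [TopologicalSpace X] [CompactSpace X] [T2Space X] [Nonempty X]
    (h : ℝ → X → ℝ)
    (hcont : ContinuousOn (fun p : ℝ × X => h p.1 p.2) (Icc 0 1 ×ˢ univ)) :
    (⨆ x, ∫ t in (0:ℝ)..1, h t x) - (⨅ x, ∫ t in (0:ℝ)..1, h t x) ≤ hoferNorm h ∧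
    (hoferNorm h = (⨆ x, ∫ t in (0:ℝ)..1, h t x) - (⨅ x, ∫ t in (0:ℝ)..1, h t x) ↔
      ∃ xp xm : X, ∀ t ∈ Icc (0:ℝ) 1,
        h t xp = (⨆ x, h t x) ∧ h t xm = (⨅ x, h t x)) := by
  classical
  -- clamp to [0,1]
  set c : ℝ → ℝ := fun t => max 0 (min 1 t) with hc_def
  have hc_cont : Continuous c := continuous_const.max (continuous_const.min continuous_id)
  have hc_mem : ∀ t, c t ∈ Icc (0:ℝ) 1 :=
    fun t => ⟨le_max_left _ _, max_le zero_le_one (min_le_left _ _)⟩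
  have hc_eq : ∀ t ∈ Icc (0:ℝ) 1, c t = t := by
    intro t ht
    simp only [hc_def]
    rw [min_eq_right ht.2, max_eq_right ht.1]
  set g : ℝ → X → ℝ := fun t x => h (c t) x with hg_def
  have hgcont : Continuous (fun p : ℝ × X => g p.1 p.2) := by
    have : Continuous (fun p : ℝ × X => (c p.1, p.2)) :=
      (hc_cont.comp continuous_fst).prodMk continuous_snd
    exact hcont.comp_continuous this (fun p => ⟨hc_mem p.1, mem_univ _⟩)
  have hgx : ∀ x : X, Continuous (fun t => g t x) :=
    fun x => hgcont.comp (continuous_id.prodMk continuous_const)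
  have hgt : ∀ t : ℝ, Continuous (fun x => g t x) :=
    fun t => hgcont.comp (continuous_const.prodMk continuous_id)
  have hgh : ∀ t ∈ Icc (0:ℝ) 1, ∀ x, g t x = h t x := by
    intro t ht x
    simp only [hg_def, hc_eq t ht]
  -- M and m
  set M : ℝ → ℝ := fun t => ⨆ x, g t x with hM_def
  set m : ℝ → ℝ := fun t => ⨅ x, g t x with hm_def
  set G : C(ℝ × X, ℝ) := ⟨fun p => g p.1 p.2, hgcont⟩ with hG_def
  have hM_cont : Continuous M := hofer_sup_lipschitz.continuous.comp G.curry.continuous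
  have hm_cont : Continuous m := hofer_inf_lipschitz.continuous.comp G.curry.continuous
  have hle_M : ∀ t x, g t x ≤ M t :=
    fun t x => le_ciSup (isCompact_range (hgt t)).bddAbove x
  have hge_m : ∀ t x, m t ≤ g t x :=
    fun t x => ciInf_le (isCompact_range (hgt t)).bddBelow x
  -- integrability
  have hMint : IntervalIntegrable M MeasureTheory.volume 0 1 := hM_cont.intervalIntegrable 0 1
  have hmint : IntervalIntegrable m MeasureTheory.volume 0 1 := hm_cont.intervalIntegrable 0 1
  have hgint : ∀ x, IntervalIntegrable (fun t => g t x) MeasureTheory.volume 0 1 :=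
    fun x => (hgx x).intervalIntegrable 0 1
  -- the averaged function A
  set A : X → ℝ := fun x => ∫ t in (0:ℝ)..1, g t x with hA_def
  have hcc : ∀ t, c (c t) = c t := fun t => hc_eq _ (hc_mem t)
  have hA_cont : Continuous A := by
    have hG2 : Continuous (fun p : X × Icc (0:ℝ) 1 => g (p.2 : ℝ) p.1) :=
      hgcont.comp ((continuous_subtype_val.comp continuous_snd).prodMk continuous_fst)
    set G2 : C(X × Icc (0:ℝ) 1, ℝ) := ⟨_, hG2⟩ with hG2_def
    have hAeq : A = fun x => ∫ t in (0:ℝ)..1,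
        (G2.curry x) ⟨max 0 (min 1 t), ⟨le_max_left _ _, max_le zero_le_one (min_le_left _ _)⟩⟩ := by
      funext x
      refine intervalIntegral.integral_congr fun t _ => ?_
      show g t x = g (c t) x
      simp only [hg_def]
      rw [hcc]
    rw [hAeq]
    exact hofer_integral_lipschitz.continuous.comp G2.curry.continuous
  have hA_bddA : BddAbove (range A) := (isCompact_range hA_cont).bddAbove
  have hA_bddB : BddBelow (range A) := (isCompact_range hA_cont).bddBelow
  -- A x between ∫ m and ∫ M
  have hA_le : ∀ x, A x ≤ ∫ t in (0:ℝ)..1, M t :=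
    fun x => intervalIntegral.integral_mono_on zero_le_one (hgint x) hMint
      (fun t _ => hle_M t x)
  have hA_ge : ∀ x, (∫ t in (0:ℝ)..1, m t) ≤ A x :=
    fun x => intervalIntegral.integral_mono_on zero_le_one hmint (hgint x)
      (fun t _ => hge_m t x)
  -- identify the sups/infs in the statement with those of A
  have hAh : (fun x => ∫ t in (0:ℝ)..1, h t x) = A := by
    funext x
    rw [hA_def]
    refine (intervalIntegral.integral_congr fun t ht => ?_).symm
    rw [uIcc_of_le zero_le_one] at ht
    exact hgh t ht x
  -- identify hoferNorm h
  have hhofer : hoferNorm h = (∫ t in (0:ℝ)..1, M t) - ∫ t in (0:ℝ)..1, m t := by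
    rw [hoferNorm, ← intervalIntegral.integral_sub hMint hmint]
    refine intervalIntegral.integral_congr fun t ht => ?_
    rw [uIcc_of_le zero_le_one] at ht
    have h1 : (fun x => h t x) = fun x => g t x := funext fun x => (hgh t ht x).symm
    simp only [h1, hM_def, hm_def]
  -- attainment of sup and inf of A
  obtain ⟨xM, -, hxM'⟩ := isCompact_univ.exists_isMaxOn univ_nonempty hA_cont.continuousOn
  obtain ⟨xm, -, hxm'⟩ := isCompact_univ.exists_isMinOn univ_nonempty hA_cont.continuousOn
  have hxM : ∀ y, A y ≤ A xM := fun y => hxM' (mem_univ y)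
  have hxm : ∀ y, A xm ≤ A y := fun y => hxm' (mem_univ y)
  have hsupA : (⨆ x, A x) = A xM :=
    le_antisymm (ciSup_le fun x => hxM x) (le_ciSup hA_bddA xM)
  have hinfA : (⨅ x, A x) = A xm :=
    le_antisymm (ciInf_le hA_bddB xm) (le_ciInf fun x => hxm x)
  rw [hAh, hhofer, hsupA, hinfA]
  constructor
  · linarith [hA_le xM, hA_ge xm]
  constructor
  · -- equality implies existence of spanning max/min points
    intro heq
    have h1 : A xM = ∫ t in (0:ℝ)..1, M t := by linarith [hA_le xM, hA_ge xm]
    have h2 : A xm = ∫ t in (0:ℝ)..1, m t := by linarith [hA_le xM, hA_ge xm]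
    refine ⟨xM, xm, fun t ht => ?_⟩
    have hmax : g t xM = M t := by
      by_contra hne
      have hlt : g t xM < M t := lt_of_le_of_ne (hle_M t xM) hne
      have : A xM < ∫ s in (0:ℝ)..1, M s :=
        intervalIntegral.integral_lt_integral_of_continuousOn_of_le_of_exists_lt
          zero_lt_one (hgx xM).continuousOn hM_cont.continuousOn
          (fun s _ => hle_M s xM) ⟨t, ht, hlt⟩
      linarith
    have hmin : g t xm = m t := by
      by_contra hne
      have hlt : m t < g t xm := lt_of_le_of_ne (hge_m t xm) (Ne.symm hne)
      have : (∫ s in (0:ℝ)..1, m s) < A xm :=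
        intervalIntegral.integral_lt_integral_of_continuousOn_of_le_of_exists_lt
          zero_lt_one hm_cont.continuousOn (hgx xm).continuousOn
          (fun s _ => hge_m s xm) ⟨t, ht, hlt⟩
      linarith
    have hfun : (fun x => h t x) = fun x => g t x := funext fun x => (hgh t ht x).symm
    constructor
    · rw [← hgh t ht xM, hmax, hM_def]
      simp only [hfun]
    · rw [← hgh t ht xm, hmin, hm_def]
      simp only [hfun]
  · -- existence implies equality
    rintro ⟨xp, xq, hpq⟩
    have hAp : A xp = ∫ t in (0:ℝ)..1, M t := by
      refine intervalIntegral.integral_congr fun t ht => ?_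
      rw [uIcc_of_le zero_le_one] at ht
      have hfun : (fun x => h t x) = fun x => g t x := funext fun x => (hgh t ht x).symm
      have := (hpq t ht).1
      rw [← hgh t ht xp] at this
      rw [this, hM_def]
      simp only [hfun]
    have hAq : A xq = ∫ t in (0:ℝ)..1, m t := by
      refine intervalIntegral.integral_congr fun t ht => ?_
      rw [uIcc_of_le zero_le_one] at ht
      have hfun : (fun x => h t x) = fun x => g t x := funext fun x => (hgh t ht x).symm
      have := (hpq t ht).2
      rw [← hgh t ht xq] at this
      rw [this, hm_def]
      simp only [hfun]
    have e1 : A xM = ∫ t in (0:ℝ)..1, M t :=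
      le_antisymm (hA_le xM) (hAp ▸ hxM xp)
    have e2 : A xm = ∫ t in (0:ℝ)..1, m t :=
      le_antisymm (hAq ▸ hxm xq) (hA_ge xm)
    rw [e1, e2]
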